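/- Let d > 0 be a real such that 1 - f(l) ≤ d/(l+2)² for all l ∈ ℕ. Then for all integers k ≥ 1 and T with 1 ≤ T ≤ e^{-1 + k(1-γ)/γ}: w̄(k,T) ≤ (e^{1/(1-γ)}/(1-γ)) · T^{1 + 1/(1-γ)} · [ (1-γ)·p·d/γ ]^k. -/

import Mathlib

set_option maxHeartbeats 1600000 in
/-- **Upper bound for the learning rate `1 - f(l) ≤ d/(l+2)²` (Theorem 4, last statement).**
If `1 - f l ≤ d/(l+2)²` for all `l` and `1 ≤ T ≤ e^{-1 + k(1-γ)/γ}`, then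
`w̄(k,T) ≤ (e^{1/(1-γ)}/(1-γ)) · T^{1+1/(1-γ)} · ((1-γ)pd/γ)^k`. -/
theorem selfloop_free_quadratic_learning_upper_bound
    (p h γ : ℝ) (hp : 0 < p) (hh : 0 ≤ h) (hph : p + h ≤ 1)
    (hγ0 : 0 < γ) (hγ1 : γ < 1)
    (f : ℕ → ℝ) (hf0 : ∀ l, 0 ≤ f l) (hf1 : ∀ l, f l ≤ 1)
    (α : ℕ → ℝ)
    (hα : ∀ l, α l = p * (1 - f l) / (γ + (1 - γ) * (p + h) * (1 - f l)))
    (pr : ℕ → ℕ → ℝ)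
    (hpr00 : pr 0 0 = 1)
    (hpr0 : ∀ i, pr 0 (i + 1) = (1 - α i) * pr 0 i)
    (hprj0 : ∀ j, pr (j + 1) 0 = ((1 - γ) * α 0) ^ (j + 1))
    (hprrec : ∀ j i, pr (j + 1) (i + 1) =
      (1 - γ) * α (i + 1) * pr j (i + 1) + γ * α i * pr j i + (1 - α i) * pr (j + 1) i)
    (d : ℝ) (hd : 0 < d)
    (hfd : ∀ l : ℕ, 1 - f l ≤ d / ((l : ℝ) + 2) ^ 2)
    (k : ℕ) (hk : 1 ≤ k)
    (T : ℕ) (hT1 : 1 ≤ T)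
    (hT2 : (T : ℝ) ≤ Real.exp (-1 + (k : ℝ) * (1 - γ) / γ)) :
    ∑ i ∈ Finset.range T, α i * pr (k - 1) i ≤
      (Real.exp (1 / (1 - γ)) / (1 - γ)) * (T : ℝ) ^ (1 + 1 / (1 - γ))
        * ((1 - γ) * p * d / γ) ^ k := by
  have h1γ : (0:ℝ) < 1 - γ := by linarith
  set X : ℝ := (1 - γ) * p * d / γ with hXdef
  have hX0 : 0 < X := div_pos (by positivity) hγ0
  have hXne : X ≠ 0 := ne_of_gt hX0
  set x : ℝ := γ / (1 - γ) with hxdef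
  have hx0 : (0:ℝ) ≤ x := le_of_lt (div_pos hγ0 h1γ)
  have hxX : x * X = p * d := by
    rw [hxdef, hXdef]
    field_simp
  have hfnn : ∀ l, 0 ≤ 1 - f l := fun l => by linarith [hf1 l]
  have hDpos : ∀ l, 0 < γ + (1 - γ) * (p + h) * (1 - f l) := fun l => by
    have h1 : 0 ≤ (1 - γ) * (p + h) * (1 - f l) :=
      mul_nonneg (mul_nonneg h1γ.le (by linarith)) (hfnn l)
    linarith
  have hαnn : ∀ l, 0 ≤ α l := fun l => by
    rw [hα l]; exact div_nonneg (mul_nonneg hp.le (hfnn l)) (hDpos l).le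
  have hα1 : ∀ l, α l ≤ 1 := fun l => by
    rw [hα l, div_le_one (hDpos l)]
    have h1 : p * (1 - f l) ≤ (p + h) * (1 - f l) :=
      mul_le_mul_of_nonneg_right (by linarith) (hfnn l)
    have hu1 : (p + h) * (1 - f l) ≤ 1 :=
      mul_le_one₀ hph (hfnn l) (by linarith [hf0 l])
    nlinarith [mul_nonneg hγ0.le (sub_nonneg.2 hu1)]
  have hαle : ∀ l, α l ≤ p * d / (γ * ((l:ℝ) + 2) ^ 2) := fun l => by
    have hl2 : (0:ℝ) < ((l:ℝ) + 2) ^ 2 := by positivity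
    have hDge : γ ≤ γ + (1 - γ) * (p + h) * (1 - f l) := by
      nlinarith [mul_nonneg (mul_nonneg h1γ.le (by linarith : (0:ℝ) ≤ p + h)) (hfnn l)]
    have h1 : p * (1 - f l) ≤ p * (d / ((l:ℝ) + 2) ^ 2) :=
      mul_le_mul_of_nonneg_left (hfd l) hp.le
    have h2 := div_le_div₀ (by positivity) h1 hγ0 hDge
    rw [hα l]
    have e : p * (d / ((l:ℝ) + 2) ^ 2) / γ = p * d / (γ * ((l:ℝ) + 2) ^ 2) := by
      field_simp
    linarith [h2, e]
  have hc1 : ∀ l, (1 - γ) * α l ≤ X / (((l:ℝ) + 2) ^ 2) := fun l => by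
    have h1 := hαle l
    have e : (1 - γ) * (p * d / (γ * ((l:ℝ) + 2) ^ 2)) = X / ((l:ℝ) + 2) ^ 2 := by
      rw [hXdef]
      have : ((l:ℝ) + 2) ^ 2 ≠ 0 := by positivity
      field_simp
    calc (1 - γ) * α l ≤ (1 - γ) * (p * d / (γ * ((l:ℝ) + 2) ^ 2)) :=
          mul_le_mul_of_nonneg_left h1 h1γ.le
      _ = X / ((l:ℝ) + 2) ^ 2 := e
  have hc2f : ∀ l, γ * α l ≤ x * X / (((l:ℝ) + 2) ^ 2) := fun l => by
    have h1 := hαle l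
    rw [hxX]
    have e : γ * (p * d / (γ * ((l:ℝ) + 2) ^ 2)) = p * d / ((l:ℝ) + 2) ^ 2 := by
      have : ((l:ℝ) + 2) ^ 2 ≠ 0 := by positivity
      field_simp
    calc γ * α l ≤ γ * (p * d / (γ * ((l:ℝ) + 2) ^ 2)) :=
          mul_le_mul_of_nonneg_left h1 hγ0.le
      _ = p * d / ((l:ℝ) + 2) ^ 2 := e
  have hprnn : ∀ j i, 0 ≤ pr j i := by
    intro j
    induction j with
    | zero =>
      intro i
      induction i with
      | zero => rw [hpr00]; norm_num
      | succ i ih => rw [hpr0 i]; exact mul_nonneg (by linarith [hα1 i]) ih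
    | succ j ihj =>
      intro i
      induction i with
      | zero => rw [hprj0 j]; exact pow_nonneg (mul_nonneg h1γ.le (hαnn 0)) _
      | succ i ihi =>
        rw [hprrec j i]
        have h1 := mul_nonneg (mul_nonneg h1γ.le (hαnn (i+1))) (ihj (i+1))
        have h2 := mul_nonneg (mul_nonneg hγ0.le (hαnn i)) (ihj i)
        have h3 := mul_nonneg (by linarith [hα1 i] : (0:ℝ) ≤ 1 - α i) ihi
        linarith
  -- telescoping bound on the partial sums of 1/(l+2)^2
  have htle : ∀ i : ℕ, ∑ l ∈ Finset.range i, (1:ℝ)/((l:ℝ)+2)^2 ≤ 1 := by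
    have key : ∀ i : ℕ, ∑ l ∈ Finset.range i, (1:ℝ)/((l:ℝ)+2)^2 ≤ 1 - 1/((i:ℝ)+1) := by
      intro i
      induction i with
      | zero => simp
      | succ i ih =>
        rw [Finset.sum_range_succ]
        push_cast
        have h1 : (0:ℝ) < (i:ℝ)+1 := by positivity
        have h2 : (0:ℝ) < (i:ℝ)+2 := by positivity
        have h3 : (1:ℝ)/((i:ℝ)+2)^2 ≤ 1/((i:ℝ)+1) - 1/((i:ℝ)+2) := by
          rw [div_sub_div _ _ (ne_of_gt h1) (ne_of_gt h2), div_le_div_iff₀ (by positivity) (by positivity)]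
          nlinarith
        rw [show ((i:ℝ)+1+1) = (i:ℝ)+2 from by ring]
        linarith
    intro i
    have h1 := key i
    have h2 : (0:ℝ) < 1/((i:ℝ)+1) := by positivity
    linarith
  -- main inductive bound
  have key : ∀ i n : ℕ, ∑ j ∈ Finset.range n, pr j i / X ^ j ≤
      2*((i:ℝ)+2)/((i:ℝ)+3) * Real.exp (x * ∑ l ∈ Finset.range i, (1:ℝ)/((l:ℝ)+2)^2) := by
    intro i
    induction i with
    | zero =>
      intro n
      have hpr0b : ∀ j : ℕ, pr j 0 / X ^ j ≤ (1/4:ℝ) ^ j := by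
        intro j
        have hXj : (0:ℝ) < X ^ j := pow_pos hX0 j
        rw [div_le_iff₀ hXj]
        have hb : pr j 0 ≤ (X/4) ^ j := by
          cases j with
          | zero => simp [hpr00]
          | succ j =>
            rw [hprj0 j]
            apply pow_le_pow_left₀ (mul_nonneg h1γ.le (hαnn 0))
            have h1 := hc1 0
            have e0 : (((0:ℕ):ℝ)+2)^2 = 4 := by norm_num
            rw [e0] at h1
            exact h1
        calc pr j 0 ≤ (X/4) ^ j := hb
          _ = (1/4:ℝ) ^ j * X ^ j := by
              rw [div_pow, one_div, inv_pow, inv_mul_eq_div]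
      have hg : ∑ j ∈ Finset.range n, pr j 0 / X ^ j ≤ ∑ j ∈ Finset.range n, (1/4:ℝ) ^ j :=
        Finset.sum_le_sum fun j _ => hpr0b j
      have hgeo : ∑ j ∈ Finset.range n, (1/4:ℝ) ^ j ≤ 4/3 := by
        rw [geom_sum_eq (by norm_num : (1/4:ℝ) ≠ 1)]
        have h0 : (0:ℝ) ≤ (1/4:ℝ) ^ n := by positivity
        have e : ((1/4:ℝ) ^ n - 1)/((1/4:ℝ) - 1) = (1 - (1/4:ℝ) ^ n) * (4/3) := by ring
        rw [e]; nlinarith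
      have hrhs : 2*(((0:ℕ):ℝ)+2)/(((0:ℕ):ℝ)+3)
          * Real.exp (x * ∑ l ∈ Finset.range 0, (1:ℝ)/((l:ℝ)+2)^2) = 4/3 := by
        norm_num
      rw [hrhs]
      exact le_trans hg hgeo
    | succ i ih =>
      intro n
      have main : (∑ j ∈ Finset.range n, pr j (i+1) / X ^ j) ≤
          2*((i:ℝ)+3)/((i:ℝ)+4) * Real.exp (x * ((∑ l ∈ Finset.range i, (1:ℝ)/((l:ℝ)+2)^2)
            + 1/((i:ℝ)+2)^2)) := by
        cases n with
        | zero => simp; positivity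
        | succ m =>
          have hc1' : (1-γ) * α (i+1) ≤ X / ((i:ℝ)+3)^2 := by
            have h1 := hc1 (i+1)
            have e : ((↑(i+1):ℝ)+2)^2 = ((i:ℝ)+3)^2 := by push_cast; ring
            rwa [e] at h1
          have hterm : ∀ j : ℕ, pr (j+1) (i+1) / X ^ (j+1) ≤
              1/((i:ℝ)+3)^2 * (pr j (i+1) / X ^ j) + x/((i:ℝ)+2)^2 * (pr j i / X ^ j)
                + pr (j+1) i / X ^ (j+1) := by
            intro j
            have hXj : (0:ℝ) < X ^ j := pow_pos hX0 j
            have hXj1 : (0:ℝ) < X ^ (j+1) := pow_pos hX0 (j+1)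
            have e : pr (j+1) (i+1) / X ^ (j+1) =
                ((1-γ) * α (i+1) / X) * (pr j (i+1) / X ^ j)
                  + (γ * α i / X) * (pr j i / X ^ j)
                  + (1 - α i) * (pr (j+1) i / X ^ (j+1)) := by
              rw [hprrec j i, pow_succ]
              field_simp
            rw [e]
            have hu : 0 ≤ pr j (i+1) / X ^ j := div_nonneg (hprnn _ _) hXj.le
            have hv : 0 ≤ pr j i / X ^ j := div_nonneg (hprnn _ _) hXj.le
            have hw : 0 ≤ pr (j+1) i / X ^ (j+1) := div_nonneg (hprnn _ _) hXj1.le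
            have b1 : (1-γ) * α (i+1) / X ≤ 1/((i:ℝ)+3)^2 := by
              rw [div_le_div_iff₀ hX0 (by positivity : (0:ℝ) < ((i:ℝ)+3)^2)]
              have h2 := mul_le_mul_of_nonneg_right hc1' (by positivity : (0:ℝ) ≤ ((i:ℝ)+3)^2)
              rw [div_mul_cancel₀ _ (by positivity : ((i:ℝ)+3)^2 ≠ 0)] at h2
              linarith
            have b2 : γ * α i / X ≤ x/((i:ℝ)+2)^2 := by
              have h1 := hc2f i
              rw [div_le_div_iff₀ hX0 (by positivity : (0:ℝ) < ((i:ℝ)+2)^2)]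
              have h2 := mul_le_mul_of_nonneg_right h1 (by positivity : (0:ℝ) ≤ ((i:ℝ)+2)^2)
              rw [div_mul_cancel₀ _ (by positivity : ((i:ℝ)+2)^2 ≠ 0)] at h2
              linarith
            have b3 : (1 - α i) * (pr (j+1) i / X ^ (j+1)) ≤ pr (j+1) i / X ^ (j+1) := by
              nlinarith [mul_nonneg (hαnn i) hw]
            have t1 := mul_le_mul_of_nonneg_right b1 hu
            have t2 := mul_le_mul_of_nonneg_right b2 hv
            linarith
          have hS1 : ∑ j ∈ Finset.range (m+1), pr j (i+1) / X ^ j ≤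
              (∑ j ∈ Finset.range m, (1/((i:ℝ)+3)^2 * (pr j (i+1) / X ^ j)
                + x/((i:ℝ)+2)^2 * (pr j i / X ^ j) + pr (j+1) i / X ^ (j+1)))
                + pr 0 i := by
            rw [Finset.sum_range_succ']
            apply add_le_add (Finset.sum_le_sum fun j _ => hterm j)
            rw [pow_zero, div_one, hpr0 i]
            nlinarith [hprnn 0 i, hαnn i]
          have hS2 : (∑ j ∈ Finset.range m, (1/((i:ℝ)+3)^2 * (pr j (i+1) / X ^ j)
                + x/((i:ℝ)+2)^2 * (pr j i / X ^ j) + pr (j+1) i / X ^ (j+1)))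
              = 1/((i:ℝ)+3)^2 * (∑ j ∈ Finset.range m, pr j (i+1) / X ^ j)
                + x/((i:ℝ)+2)^2 * (∑ j ∈ Finset.range m, pr j i / X ^ j)
                + ∑ j ∈ Finset.range m, pr (j+1) i / X ^ (j+1) := by
            rw [Finset.sum_add_distrib, Finset.sum_add_distrib, Finset.mul_sum, Finset.mul_sum]
          have hback : (∑ j ∈ Finset.range m, pr (j+1) i / X ^ (j+1)) + pr 0 i
              = ∑ j ∈ Finset.range (m+1), pr j i / X ^ j := by
            have e := Finset.sum_range_succ' (fun j => pr j i / X ^ j) m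
            simp only [pow_zero, div_one] at e
            exact e.symm
          have hA : (∑ j ∈ Finset.range m, pr j (i+1) / X ^ j)
              ≤ ∑ j ∈ Finset.range (m+1), pr j (i+1) / X ^ j := by
            rw [Finset.sum_range_succ]
            linarith [div_nonneg (hprnn m (i+1)) (pow_pos hX0 m).le]
          have hMi := ih (m+1)
          have hMi' := ih m
          have e1 := mul_le_mul_of_nonneg_left hA (by positivity : (0:ℝ) ≤ 1/((i:ℝ)+3)^2)
          have e2 := mul_le_mul_of_nonneg_left hMi'
            (div_nonneg hx0 (by positivity : (0:ℝ) ≤ ((i:ℝ)+2)^2))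
          have hcomb : ∑ j ∈ Finset.range (m+1), pr j (i+1) / X ^ j ≤
              1/((i:ℝ)+3)^2 * (∑ j ∈ Finset.range (m+1), pr j (i+1) / X ^ j)
              + x/((i:ℝ)+2)^2 * (2*((i:ℝ)+2)/((i:ℝ)+3)
                  * Real.exp (x * ∑ l ∈ Finset.range i, (1:ℝ)/((l:ℝ)+2)^2))
              + 2*((i:ℝ)+2)/((i:ℝ)+3)
                  * Real.exp (x * ∑ l ∈ Finset.range i, (1:ℝ)/((l:ℝ)+2)^2) := by
            calc ∑ j ∈ Finset.range (m+1), pr j (i+1) / X ^ j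
                ≤ (∑ j ∈ Finset.range m, (1/((i:ℝ)+3)^2 * (pr j (i+1) / X ^ j)
                    + x/((i:ℝ)+2)^2 * (pr j i / X ^ j) + pr (j+1) i / X ^ (j+1)))
                    + pr 0 i := hS1
              _ = 1/((i:ℝ)+3)^2 * (∑ j ∈ Finset.range m, pr j (i+1) / X ^ j)
                  + x/((i:ℝ)+2)^2 * (∑ j ∈ Finset.range m, pr j i / X ^ j)
                  + ((∑ j ∈ Finset.range m, pr (j+1) i / X ^ (j+1)) + pr 0 i) := by
                  rw [hS2]; ring
              _ = 1/((i:ℝ)+3)^2 * (∑ j ∈ Finset.range m, pr j (i+1) / X ^ j)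
                  + x/((i:ℝ)+2)^2 * (∑ j ∈ Finset.range m, pr j i / X ^ j)
                  + ∑ j ∈ Finset.range (m+1), pr j i / X ^ j := by rw [hback]
              _ ≤ _ := add_le_add (add_le_add e1 e2) hMi
          have hexp3 : 1 + x/((i:ℝ)+2)^2 ≤ Real.exp (x/((i:ℝ)+2)^2) := by
            linarith [Real.add_one_le_exp (x/((i:ℝ)+2)^2)]
          have hMnn : (0:ℝ) ≤ 2*((i:ℝ)+2)/((i:ℝ)+3)
              * Real.exp (x * ∑ l ∈ Finset.range i, (1:ℝ)/((l:ℝ)+2)^2) := by positivity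
          have hfact : (1 - 1/((i:ℝ)+3)^2) * (∑ j ∈ Finset.range (m+1), pr j (i+1) / X ^ j)
              ≤ Real.exp (x/((i:ℝ)+2)^2) * (2*((i:ℝ)+2)/((i:ℝ)+3)
                  * Real.exp (x * ∑ l ∈ Finset.range i, (1:ℝ)/((l:ℝ)+2)^2)) := by
            have h6 := mul_le_mul_of_nonneg_right hexp3 hMnn
            nlinarith [hcomb]
          have hid2 : (1 - 1/((i:ℝ)+3)^2) = (((i:ℝ)+2)*((i:ℝ)+4))/((i:ℝ)+3)^2 := by
            field_simp
            ring
          rw [hid2] at hfact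
          rw [div_mul_eq_mul_div, div_le_iff₀ (by positivity : (0:ℝ) < ((i:ℝ)+3)^2)] at hfact
          have hexp2 : Real.exp (x * ((∑ l ∈ Finset.range i, (1:ℝ)/((l:ℝ)+2)^2)
              + 1/((i:ℝ)+2)^2)) = Real.exp (x * ∑ l ∈ Finset.range i, (1:ℝ)/((l:ℝ)+2)^2)
                * Real.exp (x/((i:ℝ)+2)^2) := by
            rw [← Real.exp_add]
            congr 1
            ring
          rw [hexp2]
          rw [← mul_le_mul_iff_right₀ (show (0:ℝ) < ((i:ℝ)+2)*((i:ℝ)+4) by positivity)]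
          calc ((i:ℝ)+2)*((i:ℝ)+4) * (∑ j ∈ Finset.range (m+1), pr j (i+1) / X ^ j)
              ≤ Real.exp (x/((i:ℝ)+2)^2) * (2*((i:ℝ)+2)/((i:ℝ)+3)
                  * Real.exp (x * ∑ l ∈ Finset.range i, (1:ℝ)/((l:ℝ)+2)^2)) * ((i:ℝ)+3)^2 :=
                hfact
            _ = ((i:ℝ)+2)*((i:ℝ)+4) * (2*((i:ℝ)+3)/((i:ℝ)+4)
                  * (Real.exp (x * ∑ l ∈ Finset.range i, (1:ℝ)/((l:ℝ)+2)^2)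
                    * Real.exp (x/((i:ℝ)+2)^2))) := by
                field_simp
      refine le_trans main (le_of_eq ?_)
      rw [Finset.sum_range_succ]
      push_cast
      ring_nf
  -- uniform bound on pr
  have prbound : ∀ i, pr (k-1) i ≤ Real.exp (1/(1-γ)) * X ^ (k-1) := by
    intro i
    have h1 : pr (k-1) i / X ^ (k-1) ≤ ∑ j ∈ Finset.range (k-1+1), pr j i / X ^ j := by
      apply Finset.single_le_sum (f := fun j => pr j i / X ^ j)
      · intro j _; exact div_nonneg (hprnn j i) (pow_pos hX0 j).le
      · exact Finset.self_mem_range_succ (k-1)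
    have h2 := key i (k-1+1)
    have h3 : 2*((i:ℝ)+2)/((i:ℝ)+3)
        * Real.exp (x * ∑ l ∈ Finset.range i, (1:ℝ)/((l:ℝ)+2)^2) ≤ Real.exp (1/(1-γ)) := by
      have ht := htle i
      have hsum_nn : (0:ℝ) ≤ ∑ l ∈ Finset.range i, (1:ℝ)/((l:ℝ)+2)^2 :=
        Finset.sum_nonneg fun l _ => by positivity
      have he1 : Real.exp (x * ∑ l ∈ Finset.range i, (1:ℝ)/((l:ℝ)+2)^2) ≤ Real.exp x := by
        apply Real.exp_le_exp.2
        nlinarith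
      have hfrac : 2*((i:ℝ)+2)/((i:ℝ)+3) ≤ 2 := by
        rw [div_le_iff₀ (by positivity : (0:ℝ) < (i:ℝ)+3)]
        linarith
      have h2e : (2:ℝ) ≤ Real.exp 1 := by
        linarith [Real.add_one_le_exp (1:ℝ)]
      have hid : (1:ℝ)/(1-γ) = 1 + x := by
        rw [hxdef]
        field_simp
        ring
      rw [hid, Real.exp_add]
      calc 2*((i:ℝ)+2)/((i:ℝ)+3)
            * Real.exp (x * ∑ l ∈ Finset.range i, (1:ℝ)/((l:ℝ)+2)^2)
          ≤ 2 * Real.exp x := by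
            apply mul_le_mul hfrac he1 (Real.exp_pos _).le (by norm_num)
        _ ≤ Real.exp 1 * Real.exp x := mul_le_mul_of_nonneg_right h2e (Real.exp_pos _).le
    have h4 : pr (k-1) i / X ^ (k-1) ≤ Real.exp (1/(1-γ)) := le_trans h1 (le_trans h2 h3)
    rw [div_le_iff₀ (pow_pos hX0 _)] at h4
    linarith
  -- final assembly
  have step1 : ∑ i ∈ Finset.range T, α i * pr (k-1) i ≤
      Real.exp (1/(1-γ))/(1-γ) * X ^ k * ∑ i ∈ Finset.range T, (1:ℝ)/((i:ℝ)+2)^2 := by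
    rw [Finset.mul_sum]
    apply Finset.sum_le_sum
    intro i _
    have hα' : α i ≤ X/((1-γ)*((i:ℝ)+2)^2) := by
      have h1 := hαle i
      have e : p*d/(γ*((i:ℝ)+2)^2) = X/((1-γ)*((i:ℝ)+2)^2) := by
        rw [hXdef]
        have : ((i:ℝ)+2)^2 ≠ 0 := by positivity
        field_simp
      linarith [e]
    calc α i * pr (k-1) i
        ≤ (X/((1-γ)*((i:ℝ)+2)^2)) * (Real.exp (1/(1-γ)) * X ^ (k-1)) := by
          apply mul_le_mul hα' (prbound i) (hprnn _ _) (by positivity)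
      _ = Real.exp (1/(1-γ))/(1-γ) * X ^ k * ((1:ℝ)/((i:ℝ)+2)^2) := by
          have hk' : k - 1 + 1 = k := Nat.sub_add_cancel hk
          have hXk1 : X ^ k = X ^ (k-1) * X := by rw [← pow_succ, hk']
          rw [hXk1]
          have : ((i:ℝ)+2)^2 ≠ 0 := by positivity
          field_simp
  have hXk : (0:ℝ) ≤ X ^ k := (pow_pos hX0 k).le
  have hcoef : (0:ℝ) ≤ Real.exp (1/(1-γ))/(1-γ) := by positivity
  have hrpow : (1:ℝ) ≤ (T:ℝ) ^ ((1:ℝ) + 1/(1-γ)) := by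
    have hT1' : (1:ℝ) ≤ (T:ℝ) := by exact_mod_cast hT1
    calc (1:ℝ) = (T:ℝ) ^ (0:ℝ) := (Real.rpow_zero _).symm
      _ ≤ (T:ℝ) ^ ((1:ℝ) + 1/(1-γ)) := by
          apply Real.rpow_le_rpow_of_exponent_le hT1'
          positivity
  calc ∑ i ∈ Finset.range T, α i * pr (k-1) i
      ≤ Real.exp (1/(1-γ))/(1-γ) * X ^ k * ∑ i ∈ Finset.range T, (1:ℝ)/((i:ℝ)+2)^2 := step1
    _ ≤ Real.exp (1/(1-γ))/(1-γ) * X ^ k * 1 := by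
        apply mul_le_mul_of_nonneg_left (htle T) (mul_nonneg hcoef hXk)
    _ = Real.exp (1/(1-γ))/(1-γ) * 1 * X ^ k := by ring
    _ ≤ Real.exp (1/(1-γ))/(1-γ) * (T:ℝ) ^ ((1:ℝ) + 1/(1-γ)) * X ^ k := by
        apply mul_le_mul_of_nonneg_right (mul_le_mul_of_nonneg_left hrpow hcoef) hXk
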